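/- Let a,b,c,e,f ∈ ℂ and let T ∈ M_4(ℂ) be the strictly upper triangular matrix with rows (0,a,b,c), (0,0,0,e), (0,0,0,f), (0,0,0,0) (i.e., the general nilpotent form with d = 0). Then tr[T(T(T*)² − (T*)²T)TT*] = |ae + bf|²(|a|² + |b|² − |e|² − |f|²) and tr[T²T*(T*T − TT*)T*T²T*] = conj(c)·(ae + bf)·tr[T(T(T*)² − (T*)²T)TT*]. -/

import Mathlib

open Matrix

private lemma absq (z : ℂ) : ((‖z‖ : ℝ) : ℂ) * ((‖z‖ : ℝ) : ℂ) = z * star z := by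
  rw [← Complex.ofReal_mul, ← sq, Complex.sq_norm, ← Complex.mul_conj]
  rfl

theorem trace_formulas_d_eq_zero (a b c e f : ℂ)
    (T : Matrix (Fin 4) (Fin 4) ℂ)
    (hT : T = !![0, a, b, c; 0, 0, 0, e; 0, 0, 0, f; 0, 0, 0, 0]) :
    (T * (T * Tᴴ ^ 2 - Tᴴ ^ 2 * T) * T * Tᴴ).trace
      = ((‖a * e + b * f‖ ^ 2 *
          (‖a‖ ^ 2 + ‖b‖ ^ 2 - ‖e‖ ^ 2
            - ‖f‖ ^ 2) : ℝ) : ℂ) ∧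
    (T ^ 2 * Tᴴ * (Tᴴ * T - T * Tᴴ) * Tᴴ * T ^ 2 * Tᴴ).trace
      = (starRingEnd ℂ) c * (a * e + b * f) *
          (T * (T * Tᴴ ^ 2 - Tᴴ ^ 2 * T) * T * Tᴴ).trace := by
  subst hT
  constructor <;>
  · simp only [pow_two, Matrix.trace, Matrix.diag_apply, Matrix.mul_apply,
      Matrix.sub_apply, Matrix.conjTranspose_apply, Fin.sum_univ_four,
      Matrix.of_apply, Matrix.cons_val', Matrix.cons_val_zero, Matrix.cons_val_one,
      Matrix.head_cons, Matrix.empty_val', Matrix.cons_val_fin_one, Matrix.head_fin_const,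
      Matrix.cons_val_two, Matrix.tail_cons, Matrix.cons_val_three,
      star_zero, mul_zero, zero_mul, add_zero, zero_add, sub_zero, zero_sub, mul_neg, neg_mul]
    try push_cast
    try simp only [absq, star_add, star_mul', Complex.star_def]
    ring
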